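/- Let S : X → Y be a continuous linear map between locally convex Hausdorff spaces, let Z be a lcHs and ι : Z → Y' a topological isomorphism (Y' with strong topology). Assume X is Mackey, X/ker S is complete, im S is Mackey in the topology induced by Y, the composition R = Sᵗ ∘ ι is injective, and im R is weakly closed in X'. Then S is surjective. -/

import Mathlib

open Filter Topology


/-- nhds basis for a topology induced by a map into a Pi type over ℝ. -/
lemma pi_induced_nhds_basis {G I : Type*} (f : G → I → ℝ) (x : G) (hfx : f x = 0)
    {U : Set G} (hU : U ∈ @nhds G (TopologicalSpace.induced f Pi.topologicalSpace) x) :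
    ∃ (J : Finset I) (ε : ℝ), 0 < ε ∧ {g | ∀ i ∈ J, |f g i| < ε} ⊆ U := by
  rw [@nhds_induced, hfx, Filter.mem_comap] at hU
  obtain ⟨V, hV, hVU⟩ := hU
  rw [nhds_pi, Filter.mem_pi] at hV
  obtain ⟨I₀, hI₀, t, ht, htV⟩ := hV
  classical
  set J := hI₀.toFinset with hJ
  have hε : ∀ i ∈ J, ∃ ε > 0, Metric.ball (0:ℝ) ε ⊆ t i := by
    intro i _
    exact Metric.mem_nhds_iff.1 (ht i)
  choose! ε hε0 hεb using hε
  rcases J.eq_empty_or_nonempty with h | h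
  · refine ⟨J, 1, one_pos, fun g hg => hVU (htV ?_)⟩
    intro i hi
    rw [Set.Finite.toFinset_eq_empty.mp h] at hi
    exact hi.elim
  · refine ⟨J, J.inf' h ε, ?_, ?_⟩
    · exact (Finset.lt_inf'_iff h).2 fun i hi => hε0 i hi
    · intro g hg
      refine hVU (htV ?_)
      intro i hi
      have hiJ : i ∈ J := hI₀.mem_toFinset.2 hi
      refine hεb i hiJ ?_
      simp only [Metric.mem_ball, dist_zero_right, Real.norm_eq_abs]
      exact lt_of_lt_of_le (hg i hiJ) (Finset.inf'_le ε hiJ)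

def IsMackeySpace (X : Type*) [AddCommGroup X] [Module ℝ X]
    [tX : TopologicalSpace X] : Prop :=
  ∀ t : TopologicalSpace X,
    @IsTopologicalAddGroup X t _ →
    @ContinuousSMul ℝ X _ _ t →
    @LocallyConvexSpace ℝ X _ _ _ _ t →
    ({φ : X →ₗ[ℝ] ℝ | @Continuous X ℝ t _ ⇑φ} =
      {φ : X →ₗ[ℝ] ℝ | @Continuous X ℝ tX _ ⇑φ}) →
    t ≤ tX

section
variable {X : Type*} [AddCommGroup X] [Module ℝ X] [TopologicalSpace X]
    [IsTopologicalAddGroup X] [ContinuousSMul ℝ X] [LocallyConvexSpace ℝ X]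

set_option linter.unusedSectionVars false

lemma mackey_weak_basis (hM : IsMackeySpace X) {U : Set X} (hU : U ∈ 𝓝 (0 : X)) :
    ∃ (J : Finset (X →L[ℝ] ℝ)) (ε : ℝ), 0 < ε ∧ {x | ∀ φ ∈ J, |φ x| < ε} ⊆ U := by
  let e : X →ₗ[ℝ] WeakBilin (topDualPairing ℝ X).flip :=
    { toFun := fun x => x, map_add' := fun _ _ => rfl, map_smul' := fun _ _ => rfl }
  have hcomp : TopologicalSpace.induced (⇑e) (WeakBilin.instTopologicalSpace (topDualPairing ℝ X).flip) =
      TopologicalSpace.induced (fun (x : X) (ψ : X →L[ℝ] ℝ) => ψ x) Pi.topologicalSpace := by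
    show TopologicalSpace.induced (⇑e) (TopologicalSpace.induced _ Pi.topologicalSpace) = _
    rw [induced_compose]
    rfl
  have hle : TopologicalSpace.induced (⇑e) (WeakBilin.instTopologicalSpace (topDualPairing ℝ X).flip)
      ≤ ‹TopologicalSpace X› := by
    refine hM _ (topologicalAddGroup_induced e) (continuousSMul_induced e)
      (LocallyConvexSpace.induced e) ?_
    ext φ
    simp only [Set.mem_setOf_eq]
    constructor
    · intro hφ
      have hecont : Continuous (⇑e : X → WeakBilin (topDualPairing ℝ X).flip) :=
        continuous_induced_rng.2 (continuous_pi fun ψ : X →L[ℝ] ℝ => ψ.continuous)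
      have hid : @Continuous X X ‹TopologicalSpace X›
          (TopologicalSpace.induced (⇑e) ((WeakBilin.instTopologicalSpace (topDualPairing ℝ X).flip))) (fun x => x) :=
        continuous_induced_rng.2 hecont
      exact @Continuous.comp X X ℝ ‹TopologicalSpace X›
        (TopologicalSpace.induced (⇑e) ((WeakBilin.instTopologicalSpace (topDualPairing ℝ X).flip)))
        _ _ _ hφ hid
    · intro hφ
      have h5 : Continuous fun w : WeakBilin (topDualPairing ℝ X).flip =>
          (topDualPairing ℝ X).flip w ⟨φ, hφ⟩ :=
        WeakBilin.eval_continuous (topDualPairing ℝ X).flip ⟨φ, hφ⟩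
      have h6 : @Continuous X (WeakBilin (topDualPairing ℝ X).flip)
          (TopologicalSpace.induced (⇑e) ((WeakBilin.instTopologicalSpace (topDualPairing ℝ X).flip))) _ ⇑e :=
        continuous_induced_dom
      exact @Continuous.comp X (WeakBilin (topDualPairing ℝ X).flip) ℝ
        (TopologicalSpace.induced (⇑e) ((WeakBilin.instTopologicalSpace (topDualPairing ℝ X).flip)))
        _ _ _ _ h5 h6
  rw [hcomp] at hle
  have hU' : U ∈ @nhds X (TopologicalSpace.induced
      (fun (x : X) (ψ : X →L[ℝ] ℝ) => ψ x) Pi.topologicalSpace) 0 := nhds_mono hle hU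
  exact pi_induced_nhds_basis _ 0 (by ext ψ; simp) hU'


end

set_option linter.unusedSectionVars false

section
variable {X Y Z : Type*}
    [AddCommGroup X] [Module ℝ X] [TopologicalSpace X] [IsTopologicalAddGroup X]
    [ContinuousSMul ℝ X] [LocallyConvexSpace ℝ X] [T2Space X]
    [AddCommGroup Y] [Module ℝ Y] [TopologicalSpace Y] [IsTopologicalAddGroup Y]
    [ContinuousSMul ℝ Y] [LocallyConvexSpace ℝ Y] [T2Space Y]
    [AddCommGroup Z] [Module ℝ Z] [TopologicalSpace Z] [IsTopologicalAddGroup Z]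
    [ContinuousSMul ℝ Z]

lemma sep_point_Y (y : Y) (h : ∀ ψ : Y →L[ℝ] ℝ, ψ y = 0) : y = 0 := by
  by_contra hy
  obtain ⟨f, hf⟩ := geometric_hahn_banach_point_point (Ne.symm hy)
  rw [map_zero, h f] at hf
  exact lt_irrefl 0 hf

lemma ann_sub_imR (S : X →L[ℝ] Y) (ι : Z ≃L[ℝ] (Y →L[ℝ] ℝ))
    (hRclosed : IsClosed {ψ : WeakDual ℝ X | ∃ z : Z, ∀ x : X, ψ x = ι z (S x)})
    (φ : X →L[ℝ] ℝ) (hφ : ∀ x, S x = 0 → φ x = 0) :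
    ∃ z : Z, ∀ x, φ x = ι z (S x) := by
  haveI : LocallyConvexSpace ℝ (WeakDual ℝ X) :=
    inferInstanceAs (LocallyConvexSpace ℝ (WeakBilin (topDualPairing ℝ X)))
  set s : Set (WeakDual ℝ X) := {ψ : WeakDual ℝ X | ∃ z : Z, ∀ x : X, ψ x = ι z (S x)} with hs
  -- s is the range of a linear map, hence convex
  let ρ : Z →ₗ[ℝ] WeakDual ℝ X :=
    { toFun := fun z => ((ι z).comp S : X →L[ℝ] ℝ)
      map_add' := fun z z' => by
        show ((ι (z + z')).comp S : X →L[ℝ] ℝ) = (ι z).comp S + (ι z').comp S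
        ext x; simp
      map_smul' := fun c z => by
        show ((ι (c • z)).comp S : X →L[ℝ] ℝ) = c • ((ι z).comp S)
        ext x; simp }
  have hsrange : s = Set.range ρ := by
    ext ψ
    constructor
    · rintro ⟨z, hz⟩
      refine ⟨z, ?_⟩
      show ((ι z).comp S : X →L[ℝ] ℝ) = ψ
      ext x; exact (hz x).symm
    · rintro ⟨z, rfl⟩
      exact ⟨z, fun x => rfl⟩
  have hconv : Convex ℝ s := by
    rw [hsrange, ← LinearMap.coe_range]
    exact (LinearMap.range ρ).convex
  by_contra hmem
  have hmem' : (φ : WeakDual ℝ X) ∉ s := hmem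
  obtain ⟨f, u, hfs, huf⟩ := geometric_hahn_banach_closed_point hconv hRclosed hmem'
  -- f vanishes on the subspace s
  have hf0 : ∀ a ∈ s, f a = 0 := by
    intro a ha
    by_contra hfa
    have hmem2 : ((u + 1) / f a) • a ∈ s := by
      rw [hsrange] at ha ⊢
      obtain ⟨z, rfl⟩ := ha
      exact ⟨((u + 1) / f (ρ z)) • z, map_smul ρ _ _⟩
    have := hfs _ hmem2
    rw [map_smul, smul_eq_mul, div_mul_cancel₀ _ hfa] at this
    linarith
  have hu0 : 0 < u := by
    have h0s : (0 : WeakDual ℝ X) ∈ s :=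
      ⟨0, fun x => by show (0 : X →L[ℝ] ℝ) x = ι 0 (S x); simp⟩
    have := hfs 0 h0s
    rwa [map_zero] at this
  -- f is evaluation at some point x₀
  have hfev : ∃ x₀ : X, ∀ ψ : WeakDual ℝ X, f ψ = ψ x₀ := by
    have hU : f ⁻¹' {r : ℝ | |r| < 1} ∈ 𝓝 (0 : WeakDual ℝ X) := by
      apply f.continuous.continuousAt.preimage_mem_nhds
      rw [map_zero]
      have : {r : ℝ | |r| < 1} ∈ 𝓝 (0:ℝ) := by
        apply IsOpen.mem_nhds
        · exact isOpen_lt (continuous_abs) continuous_const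
        · simp
      exact this
    have hU' : f ⁻¹' {r : ℝ | |r| < 1} ∈
        @nhds (WeakDual ℝ X) (TopologicalSpace.induced
          (fun (ψ : WeakDual ℝ X) (x : X) => ψ x) Pi.topologicalSpace) 0 := hU
    obtain ⟨J, ε, hε, hJ⟩ := pi_induced_nhds_basis _ 0
      (funext fun x => by show (0 : X →L[ℝ] ℝ) x = 0; simp) hU'
    classical
    let L : {x // x ∈ J} → (WeakDual ℝ X) →ₗ[ℝ] ℝ := fun j =>
      { toFun := fun ψ => ψ (j : X)
        map_add' := fun ψ ψ' => rfl
        map_smul' := fun c ψ => rfl }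
    have hker : ⨅ j, LinearMap.ker (L j) ≤ LinearMap.ker
        (f.toLinearMap) := by
      intro ψ hψ
      simp only [Submodule.mem_iInf, LinearMap.mem_ker] at hψ ⊢
      rw [ContinuousLinearMap.coe_coe]
      by_contra hne
      have hmem3 : ∀ c : ℝ, |f (c • ψ)| < 1 := by
        intro c
        have : (c • ψ) ∈ {g : WeakDual ℝ X | ∀ x ∈ J, |g x| < ε} := by
          intro x hx
          have : ψ x = 0 := hψ ⟨x, hx⟩
          show |(c • ψ) x| < ε
          have hcs : (c • ψ) x = c * ψ x := rfl
          rw [hcs, this, mul_zero, abs_zero]; exact hε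
        exact hJ this
      have := hmem3 (2 / f ψ)
      rw [map_smul, smul_eq_mul, div_mul_cancel₀ _ hne] at this
      norm_num at this
    have hspan := mem_span_of_iInf_ker_le_ker hker
    rw [Submodule.mem_span_range_iff_exists_fun ℝ] at hspan
    obtain ⟨c, hc⟩ := hspan
    refine ⟨∑ j, c j • (j : X), fun ψ => ?_⟩
    have h7 : (∑ j, c j • L j) ψ = f ψ := by rw [hc]; rfl
    rw [LinearMap.sum_apply] at h7
    simp only [LinearMap.smul_apply, smul_eq_mul] at h7
    rw [← h7, map_sum ψ]
    congr 1
    ext j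
    rw [map_smul ψ]
    rfl
  obtain ⟨x₀, hx₀⟩ := hfev
  have hz0 : ∀ z : Z, ι z (S x₀) = 0 := by
    intro z
    have hm : (ρ z : WeakDual ℝ X) ∈ s := ⟨z, fun x => rfl⟩
    have := hf0 _ hm
    rw [hx₀ (ρ z)] at this
    exact this
  have hS0 : S x₀ = 0 := by
    apply sep_point_Y
    intro ψ'
    have := hz0 (ι.symm ψ')
    rwa [ι.apply_symm_apply] at this
  have : φ x₀ = 0 := hφ x₀ hS0
  have hfφ : f φ = φ x₀ := hx₀ φ
  rw [hfφ, this] at huf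
  exact absurd huf (not_lt.2 hu0.le)

lemma correction (S : X →L[ℝ] Y) (ι : Z ≃L[ℝ] (Y →L[ℝ] ℝ))
    (hRclosed : IsClosed {ψ : WeakDual ℝ X | ∃ z : Z, ∀ x : X, ψ x = ι z (S x)})
    (J : Finset (X →L[ℝ] ℝ)) :
    ∃ z : {φ // φ ∈ J} → Z, ∀ x₀ : X, ∃ n : X, S n = 0 ∧
      ∀ j : {φ // φ ∈ J}, (j : X →L[ℝ] ℝ) (x₀ - n) = ι (z j) (S x₀) := by
  classical
  let T : X →ₗ[ℝ] ({φ // φ ∈ J} → ℝ) :=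
    LinearMap.pi (fun j => ((j : X →L[ℝ] ℝ) : X →ₗ[ℝ] ℝ))
  let N : Submodule ℝ X := LinearMap.ker (S : X →ₗ[ℝ] Y)
  let K : Submodule ℝ ({φ // φ ∈ J} → ℝ) := Submodule.map T N
  obtain ⟨K', hc⟩ := Submodule.exists_isCompl K
  let P : ({φ // φ ∈ J} → ℝ) →ₗ[ℝ] ({φ // φ ∈ J} → ℝ) :=
    K'.subtype.comp (K'.projectionOnto K hc.symm)
  have hPK : ∀ v ∈ K, P v = 0 := by
    intro v hv
    show K'.subtype (K'.projectionOnto K hc.symm v) = 0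
    have h : K'.projectionOnto K hc.symm v = 0 :=
      Submodule.projectionOnto_apply_right hc.symm (⟨v, hv⟩ : K)
    rw [h, map_zero]
  have hPsub : ∀ v, v - P v ∈ K := by
    intro v
    have h := Submodule.projection_add_projection_eq_self hc v
    have h2 : v - P v = (K.projectionOnto K' hc v : _) :=
      sub_eq_of_eq_add h.symm
    rw [h2]
    exact (K.projectionOnto K' hc v).2
  have hTcont : Continuous ⇑T := by
    apply continuous_pi
    intro j
    exact (j : X →L[ℝ] ℝ).continuous
  have hPcont : Continuous ⇑P := P.continuous_of_finiteDimensional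
  have hψ : ∀ j : {φ // φ ∈ J}, ∃ z : Z, ∀ x, P (T x) j = ι z (S x) := by
    intro j
    have hcont : Continuous fun x : X => P (T x) j :=
      (continuous_apply j).comp (hPcont.comp hTcont)
    have hlin : IsLinearMap ℝ fun x : X => P (T x) j :=
      ⟨fun a b => by rw [map_add, map_add]; rfl, fun c a => by rw [map_smul, map_smul]; rfl⟩
    obtain ⟨z, hz⟩ := ann_sub_imR S ι hRclosed ⟨hlin.mk' _, hcont⟩ (fun x hx => by
      show P (T x) j = 0
      have hTx : T x ∈ K := Submodule.mem_map_of_mem (by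
        show x ∈ LinearMap.ker (S : X →ₗ[ℝ] Y)
        rw [LinearMap.mem_ker, ContinuousLinearMap.coe_coe]
        exact hx)
      rw [hPK _ hTx]
      rfl)
    exact ⟨z, fun x => hz x⟩
  choose z hz using hψ
  refine ⟨z, fun x₀ => ?_⟩
  obtain ⟨n, hn, hTn⟩ := hPsub (T x₀)
  refine ⟨n, ?_, ?_⟩
  · have h' : n ∈ N := hn
    rwa [LinearMap.mem_ker, ContinuousLinearMap.coe_coe] at h'
  · intro j
    have h1 : (j : X →L[ℝ] ℝ) (x₀ - n) = T (x₀ - n) j := rfl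
    rw [h1, map_sub, hTn]
    have : (T x₀ - (T x₀ - P (T x₀))) j = P (T x₀) j := by
      rw [sub_sub_cancel]
    rw [this, hz j x₀]

lemma dense_range_S (S : X →L[ℝ] Y) (ι : Z ≃L[ℝ] (Y →L[ℝ] ℝ))
    (hRinj : Function.Injective fun z : Z => ((ι z).comp S : X →L[ℝ] ℝ))
    (y : Y) : y ∈ closure (Set.range ⇑S) := by
  by_contra hy
  have hconv : Convex ℝ (closure (Set.range ⇑S)) := by
    apply Convex.closure
    have hre : (↑(LinearMap.range (S : X →ₗ[ℝ] Y)) : Set Y) = Set.range ⇑S := by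
      rw [LinearMap.coe_range, ContinuousLinearMap.coe_coe]
    rw [← hre]
    exact (LinearMap.range (S : X →ₗ[ℝ] Y)).convex
  obtain ⟨f, u, hfs, huf⟩ := geometric_hahn_banach_closed_point hconv isClosed_closure hy
  have hf0 : ∀ x : X, f (S x) = 0 := by
    intro x
    by_contra hfa
    have : ∀ c : ℝ, f (c • S x) < u := by
      intro c
      apply hfs
      apply subset_closure
      exact ⟨c • x, by rw [map_smul]⟩
    have h2 := this ((u + 1) / f (S x))
    rw [map_smul, smul_eq_mul, div_mul_cancel₀ _ hfa] at h2
    linarith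
  have hfS : f.comp S = ((ι (ι.symm f)).comp S : X →L[ℝ] ℝ) := by
    rw [ι.apply_symm_apply]
  have hzero : ((ι (ι.symm f)).comp S : X →L[ℝ] ℝ) = ((ι 0).comp S : X →L[ℝ] ℝ) := by
    rw [← hfS]
    rw [map_zero]
    ext x
    simp [hf0 x]
  have h0 := hRinj hzero
  have hf : f = 0 := by
    have := congrArg ι h0
    rwa [ι.apply_symm_apply, map_zero] at this
  have hu0 : 0 < u := by
    have := hfs 0 (subset_closure ⟨0, map_zero S⟩)
    rwa [map_zero] at this
  rw [hf] at huf
  simp at huf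
  linarith

end

theorem stmt12 {X Y Z : Type*}
    [AddCommGroup X] [Module ℝ X] [TopologicalSpace X] [IsTopologicalAddGroup X]
    [ContinuousSMul ℝ X] [LocallyConvexSpace ℝ X] [T2Space X]
    [AddCommGroup Y] [Module ℝ Y] [TopologicalSpace Y] [IsTopologicalAddGroup Y]
    [ContinuousSMul ℝ Y] [LocallyConvexSpace ℝ Y] [T2Space Y]
    [AddCommGroup Z] [Module ℝ Z] [TopologicalSpace Z] [IsTopologicalAddGroup Z]
    [ContinuousSMul ℝ Z]
    (S : X →L[ℝ] Y)
    (hXMackey : IsMackeySpace X)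
    (hquot : @CompleteSpace (X ⧸ LinearMap.ker (S : X →ₗ[ℝ] Y))
      (IsTopologicalAddGroup.rightUniformSpace (X ⧸ LinearMap.ker (S : X →ₗ[ℝ] Y))))
    (himS : IsMackeySpace ↥(LinearMap.range (S : X →ₗ[ℝ] Y)))
    (ι : Z ≃L[ℝ] (Y →L[ℝ] ℝ))
    (hRinj : Function.Injective fun z : Z => ((ι z).comp S : X →L[ℝ] ℝ))
    (hRclosed : IsClosed {ψ : WeakDual ℝ X | ∃ z : Z, ∀ x : X, ψ x = ι z (S x)}) :
    Function.Surjective S := by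
  classical
  intro y
  set N := LinearMap.ker (S : X →ₗ[ℝ] Y) with hN
  set Q := X ⧸ N with hQ
  set π : X → Q := fun x => Submodule.Quotient.mk x with hπ
  have hπcont : Continuous π := continuous_quotient_mk'
  have hπ0 : π 0 = 0 := rfl
  -- the auxiliary map picking preimages
  set g : Y → Q := fun y' => if h : ∃ x, S x = y' then π h.choose else 0 with hg
  have hgdef : ∀ y' ∈ Set.range ⇑S, ∃ x, S x = y' ∧ g y' = π x := by
    intro y' hy'
    have h' : ∃ x, S x = y' := hy'
    refine ⟨h'.choose, h'.choose_spec, ?_⟩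
    show (if h : ∃ x, S x = y' then π h.choose else 0) = π h'.choose
    rw [dif_pos h']
  -- the filter
  set 𝓕 : Filter Y := 𝓝 y ⊓ Filter.principal (Set.range ⇑S) with hF
  have hyclos : y ∈ closure (Set.range ⇑S) := dense_range_S S ι hRinj y
  have hFneBot : 𝓕.NeBot := mem_closure_iff_clusterPt.1 hyclos
  set 𝓖 : Filter Q := Filter.map g 𝓕 with hG
  letI uQ : UniformSpace Q := IsTopologicalAddGroup.rightUniformSpace Q
  haveI huag : @IsUniformAddGroup Q uQ _ := @isUniformAddGroup_of_addCommGroup Q _ _ _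
  have hCauchy : @Cauchy Q uQ 𝓖 := by
    constructor
    · exact Filter.map_neBot
    · rw [uniformity_eq_comap_nhds_zero Q, ← Filter.map_le_iff_le_comap]
      intro U hU
      -- U is a neighborhood of 0 in Q
      have hV : π ⁻¹' U ∈ 𝓝 (0 : X) := by
        refine (hπcont.continuousAt (x := (0:X))).preimage_mem_nhds ?_
        rw [hπ0]
        exact hU
      obtain ⟨J, ε, hε, hW⟩ := mackey_weak_basis hXMackey hV
      obtain ⟨z, hz⟩ := correction S ι hRclosed J
      set A : Set Y := Set.range ⇑S ∩
        ⋂ j : {φ // φ ∈ J}, {y' | |ι (z j) y' - ι (z j) y| < ε/2} with hA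
      have hAF : A ∈ 𝓕 := by
        rw [hF]
        apply Filter.inter_mem
        · exact Filter.mem_inf_of_right (Filter.mem_principal_self _)
        · apply Filter.mem_inf_of_left
          apply Filter.iInter_mem.2
          intro j
          have hco : Continuous fun y' : Y => |ι (z j) y' - ι (z j) y| :=
            ((ι (z j)).continuous.sub continuous_const).abs
          have : {y' | |ι (z j) y' - ι (z j) y| < ε/2} = 
              (fun y' : Y => |ι (z j) y' - ι (z j) y|) ⁻¹' (Set.Iio (ε/2)) := rfl
          rw [this]
          refine hco.continuousAt.preimage_mem_nhds (Iio_mem_nhds ?_)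
          simp
          linarith
      rw [Filter.mem_map, Filter.mem_prod_iff]
      refine ⟨g '' A, Filter.image_mem_map hAF, g '' A, Filter.image_mem_map hAF, ?_⟩
      rintro ⟨q1, q2⟩ ⟨⟨a, haA, rfl⟩, ⟨b, hbA, rfl⟩⟩
      show g b - g a ∈ U
      rw [hA] at haA hbA
      obtain ⟨haS, haj⟩ := haA
      obtain ⟨hbS, hbj⟩ := hbA
      rw [Set.mem_iInter] at haj hbj
      obtain ⟨xa, hxa, hga⟩ := hgdef a haS
      obtain ⟨xb, hxb, hgb⟩ := hgdef b hbS
      obtain ⟨n, hn0, hjn⟩ := hz (xb - xa)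
      have hSm : S (xb - xa) = b - a := by rw [map_sub, hxa, hxb]
      have hmem : (xb - xa - n) ∈ {x | ∀ φ ∈ J, |φ x| < ε} := by
        intro φ hφJ
        have h6 := hjn ⟨φ, hφJ⟩
        show |φ (xb - xa - n)| < ε
        rw [h6, hSm, map_sub]
        have hb2 := hbj ⟨φ, hφJ⟩
        have ha2 := haj ⟨φ, hφJ⟩
        rw [Set.mem_setOf_eq] at hb2 ha2
        have h3 : ι (z ⟨φ, hφJ⟩) b - ι (z ⟨φ, hφJ⟩) a =
            (ι (z ⟨φ, hφJ⟩) b - ι (z ⟨φ, hφJ⟩) y) + (-(ι (z ⟨φ, hφJ⟩) a - ι (z ⟨φ, hφJ⟩) y)) := by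
          ring
        rw [h3]
        refine lt_of_le_of_lt (abs_add_le _ _) ?_
        rw [abs_neg]
        linarith
      have hπU : π (xb - xa - n) ∈ U := hW hmem
      have hπn : π n = 0 := by
        have hnN : n ∈ N := by
          rw [hN, LinearMap.mem_ker, ContinuousLinearMap.coe_coe]
          exact hn0
        exact (Submodule.Quotient.mk_eq_zero N).2 hnN
      have hπm : π (xb - xa - n) = g b - g a := by
        show Submodule.Quotient.mk (xb - xa - n) = g b - g a
        rw [Submodule.Quotient.mk_sub, Submodule.Quotient.mk_sub]
        have e1 : (Submodule.Quotient.mk n : Q) = 0 := hπn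
        rw [e1, sub_zero, hga, hgb]
      rw [← hπm]
      exact hπU
  obtain ⟨q, hq⟩ := @CompleteSpace.complete Q uQ hquot 𝓖 hCauchy
  -- the induced map on the quotient
  set Sbar : Q →ₗ[ℝ] Y := N.liftQ (S : X →ₗ[ℝ] Y) (le_refl _) with hSbar
  have hSbarπ : ∀ x, Sbar (π x) = S x := fun x => rfl
  have hSbarcont : Continuous ⇑Sbar := by
    exact continuous_quot_lift _ S.continuous
  -- limits
  have hqlim : Filter.Tendsto g 𝓕 (𝓝 q) := hq
  have hlim2 : Filter.Tendsto (⇑Sbar ∘ g) 𝓕 (𝓝 (Sbar q)) :=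
    (hSbarcont.continuousAt.tendsto).comp hqlim
  have heq : (⇑Sbar ∘ g) =ᶠ[𝓕] id := by
    have hrange : Set.range ⇑S ∈ 𝓕 :=
      Filter.mem_inf_of_right (Filter.mem_principal_self _)
    filter_upwards [hrange] with y' hy'
    obtain ⟨x, hx, hgx⟩ := hgdef y' hy'
    show Sbar (g y') = y'
    rw [hgx, hSbarπ, hx]
  have hlim3 : Filter.Tendsto id 𝓕 (𝓝 (Sbar q)) := by
    rwa [Filter.tendsto_congr' heq] at hlim2
  have hlim4 : Filter.Tendsto id 𝓕 (𝓝 y) := Filter.tendsto_id.mono_right inf_le_left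
  have hyS : y = Sbar q := tendsto_nhds_unique hlim4 hlim3
  obtain ⟨x, rfl⟩ := Submodule.Quotient.mk_surjective N q
  exact ⟨x, (hSbarπ x).symm.trans hyS.symm⟩
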